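/- Let H be a complex Hilbert space, N ≥ 2 an integer, A₁, …, A_N bounded operators on H, and (B_n)_{n≥0} a sequence of bounded operators on H with Σ_{n≥0} ‖B_n‖ εⁿ < ∞ for some ε > 0. Suppose that for every real k ∈ (0, ε) the operator S(k) := I + (ik/2π)·F(k), where F(k) := Σ_{j=1}^{N} k^{−j} A_j + Σ_{n≥0} kⁿ B_n (the series converging in operator norm), is an isometry of H. Then A_j = 0 for every j with 2 ≤ j ≤ N; i.e., the operator-valued function F has a pole of order at most one at k = 0. -/

import Mathlib

/-- If for every `k ∈ (0, ε)` the operator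
`S(k) = I + (ik/2π)·F(k)` is an isometry, where
`F(k) = Σ_{j=1}^N k^{-j} A_j + Σ_{n≥0} k^n B_n` with `Σ ‖B_n‖ εⁿ < ∞`,
then `A_j = 0` for all `2 ≤ j ≤ N`: the pole of `F` at `k = 0` has order at most one. -/
theorem unitarity_forces_first_order_pole
    {H : Type*} [NormedAddCommGroup H] [InnerProductSpace ℂ H] [CompleteSpace H]
    (N : ℕ) (hN : 2 ≤ N) (A B : ℕ → (H →L[ℂ] H)) (ε : ℝ) (hε : 0 < ε)
    (hB : Summable fun n : ℕ => ‖B n‖ * ε ^ n)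
    (hiso : ∀ k : ℝ, 0 < k → k < ε → ∀ x : H,
      ‖((1 : H →L[ℂ] H) + (Complex.I * k / (2 * Real.pi)) •
          ((∑ j ∈ Finset.Icc 1 N, ((k : ℂ) ^ (-(j : ℤ))) • A j) +
            ∑' n : ℕ, ((k : ℂ) ^ n) • B n)) x‖ = ‖x‖) :
    ∀ j : ℕ, 2 ≤ j → j ≤ N → A j = 0 := by
  have hπ : (0:ℝ) < Real.pi := Real.pi_pos
  set M : ℝ := ∑' n : ℕ, ‖B n‖ * ε ^ n with hMdef
  have hM0 : 0 ≤ M := tsum_nonneg fun n => by positivity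
  set SA : ℝ := ∑ i ∈ Finset.Icc 1 N, ‖A i‖ with hSAdef
  have hSA0 : 0 ≤ SA := Finset.sum_nonneg fun i _ => norm_nonneg _
  set F : ℝ → (H →L[ℂ] H) := fun k =>
    (∑ j ∈ Finset.Icc 1 N, ((k : ℂ) ^ (-(j : ℤ))) • A j) +
      ∑' n : ℕ, ((k : ℂ) ^ n) • B n with hFdef
  have hterm : ∀ k : ℝ, 0 < k → k < ε → ∀ n : ℕ,
      ‖((k : ℂ) ^ n) • B n‖ ≤ ‖B n‖ * ε ^ n := by
    intro k hk hkε n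
    rw [norm_smul, norm_pow, Complex.norm_real, Real.norm_eq_abs, abs_of_pos hk, mul_comm]
    exact mul_le_mul_of_nonneg_left (pow_le_pow_left₀ hk.le hkε.le n) (norm_nonneg _)
  have hsum : ∀ k : ℝ, 0 < k → k < ε →
      Summable (fun n : ℕ => ‖((k : ℂ) ^ n) • B n‖) := fun k hk hkε =>
    Summable.of_nonneg_of_le (fun n => norm_nonneg _) (hterm k hk hkε) hB
  have hT : ∀ k : ℝ, 0 < k → k < ε → ∀ x : H,
      ‖(∑' n : ℕ, ((k : ℂ) ^ n) • B n) x‖ ≤ M * ‖x‖ := by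
    intro k hk hkε x
    calc ‖(∑' n : ℕ, ((k : ℂ) ^ n) • B n) x‖
        ≤ ‖∑' n : ℕ, ((k : ℂ) ^ n) • B n‖ * ‖x‖ := ContinuousLinearMap.le_opNorm _ x
      _ ≤ M * ‖x‖ := by
          refine mul_le_mul_of_nonneg_right ?_ (norm_nonneg x)
          calc ‖∑' n : ℕ, ((k : ℂ) ^ n) • B n‖
              ≤ ∑' n : ℕ, ‖((k : ℂ) ^ n) • B n‖ := norm_tsum_le_tsum_norm (hsum k hk hkε)
            _ ≤ M := Summable.tsum_le_tsum (hterm k hk hkε) (hsum k hk hkε) hB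
  -- fundamental bound from the isometry property
  have hF : ∀ k : ℝ, 0 < k → k < ε → ∀ x : H,
      ‖F k x‖ ≤ 4 * Real.pi / k * ‖x‖ := by
    intro k hk hkε x
    have h := hiso k hk hkε x
    have hSx : ((1 : H →L[ℂ] H) + (Complex.I * k / (2 * Real.pi)) • F k) x
        = x + (Complex.I * k / (2 * Real.pi)) • F k x := by
      simp [ContinuousLinearMap.add_apply]
    have h2 : ‖(Complex.I * (k:ℂ) / (2 * (Real.pi:ℂ))) • F k x‖ ≤ 2 * ‖x‖ := by
      have heq : (Complex.I * (k:ℂ) / (2 * (Real.pi:ℂ))) • F k x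
          = (x + (Complex.I * (k:ℂ) / (2 * (Real.pi:ℂ))) • F k x) - x := by abel
      rw [heq, ← hSx]
      calc ‖_ - x‖ ≤ ‖((1 : H →L[ℂ] H) + (Complex.I * k / (2 * Real.pi)) • F k) x‖ + ‖x‖ :=
            norm_sub_le _ _
        _ = 2 * ‖x‖ := by rw [h]; ring
    have hc : ‖Complex.I * (k:ℂ) / (2 * (Real.pi:ℂ))‖ = k / (2 * Real.pi) := by
      rw [norm_div, norm_mul, norm_mul, Complex.norm_I, Complex.norm_real, Complex.norm_real]
      simp [abs_of_pos hk, abs_of_pos Real.pi_pos]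
    rw [norm_smul, hc] at h2
    have h3 : k * ‖F k x‖ ≤ 2 * ‖x‖ * (2 * Real.pi) := by
      rw [div_mul_eq_mul_div, div_le_iff₀ (by positivity : (0:ℝ) < 2 * Real.pi)] at h2
      linarith
    rw [div_mul_eq_mul_div, le_div_iff₀ hk]
    nlinarith
  -- key step: if all higher-order coefficients vanish, so does A j
  have key : ∀ j : ℕ, 2 ≤ j → j ≤ N → (∀ m, j < m → m ≤ N → A m = 0) → A j = 0 := by
    intro j hj2 hjN htail
    obtain ⟨m, rfl⟩ : ∃ m, j = m + 1 := ⟨j - 1, by omega⟩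
    have hm1 : 1 ≤ m := by omega
    ext x
    set C : ℝ := (4 * Real.pi + M + SA) * ‖x‖ with hCdef
    have hC0 : 0 ≤ C := by positivity
    have hbound : ∀ k : ℝ, 0 < k → k < min ε 1 → ‖A (m+1) x‖ ≤ k * C := by
      intro k hk hkm
      have hkε : k < ε := lt_of_lt_of_le hkm (min_le_left _ _)
      have hk1 : k ≤ 1 := le_of_lt (lt_of_lt_of_le hkm (min_le_right _ _))
      have hkC : (k:ℂ) ≠ 0 := by exact_mod_cast hk.ne'
      have hGsub : (∑ i ∈ Finset.Icc 1 N, ((k : ℂ) ^ (-(i : ℤ))) • A i)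
          = ∑ i ∈ Finset.Icc 1 (m+1), ((k : ℂ) ^ (-(i : ℤ))) • A i := by
        refine (Finset.sum_subset (Finset.Icc_subset_Icc_right hjN) fun i hi hni => ?_).symm
        have : A i = 0 := htail i (by simp at hi hni; omega) (by simp at hi; omega)
        simp [this]
      have hsplit : (∑ i ∈ Finset.Icc 1 (m+1), ((k : ℂ) ^ (-(i : ℤ))) • A i)
          = (∑ i ∈ Finset.Icc 1 m, ((k : ℂ) ^ (-(i : ℤ))) • A i)
            + ((k : ℂ) ^ (-((m+1 : ℕ) : ℤ))) • A (m+1) :=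
        Finset.sum_Icc_succ_top (by omega) _
      have hAeq : ((k : ℂ) ^ (-((m+1 : ℕ) : ℤ))) • A (m+1) x
          = F k x - (∑' n : ℕ, ((k : ℂ) ^ n) • B n) x
            - ∑ i ∈ Finset.Icc 1 m, ((k : ℂ) ^ (-(i : ℤ))) • A i x := by
        have hFk : F k = (∑ i ∈ Finset.Icc 1 m, ((k : ℂ) ^ (-(i : ℤ))) • A i)
            + ((k : ℂ) ^ (-((m+1 : ℕ) : ℤ))) • A (m+1)
            + ∑' n : ℕ, ((k : ℂ) ^ n) • B n := by
          rw [show F k = (∑ i ∈ Finset.Icc 1 N, ((k : ℂ) ^ (-(i : ℤ))) • A i) +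
            ∑' n : ℕ, ((k : ℂ) ^ n) • B n from rfl, hGsub, hsplit]
        rw [hFk]
        simp only [ContinuousLinearMap.add_apply, ContinuousLinearMap.sum_apply,
          ContinuousLinearMap.smul_apply]
        abel
      have hAx : A (m+1) x = ((k : ℂ) ^ (((m+1 : ℕ)) : ℤ)) •
          (F k x - (∑' n : ℕ, ((k : ℂ) ^ n) • B n) x
            - ∑ i ∈ Finset.Icc 1 m, ((k : ℂ) ^ (-(i : ℤ))) • A i x) := by
        rw [← hAeq, smul_smul, ← zpow_add₀ hkC, add_neg_cancel, zpow_zero, one_smul]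
      have hmid : ‖∑ i ∈ Finset.Icc 1 m, ((k : ℂ) ^ (-(i : ℤ))) • A i x‖
          ≤ k ^ (-(m : ℤ)) * (SA * ‖x‖) := by
        calc ‖∑ i ∈ Finset.Icc 1 m, ((k : ℂ) ^ (-(i : ℤ))) • A i x‖
            ≤ ∑ i ∈ Finset.Icc 1 m, ‖((k : ℂ) ^ (-(i : ℤ))) • A i x‖ :=
              norm_sum_le _ _
          _ ≤ ∑ i ∈ Finset.Icc 1 m, k ^ (-(m : ℤ)) * (‖A i‖ * ‖x‖) := by
              refine Finset.sum_le_sum fun i hi => ?_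
              rw [norm_smul, norm_zpow, Complex.norm_real, Real.norm_eq_abs, abs_of_pos hk]
              have h1 : (k:ℝ) ^ (-(i : ℤ)) ≤ k ^ (-(m : ℤ)) := by
                refine zpow_le_zpow_right_of_le_one₀ hk hk1 ?_
                simp only [neg_le_neg_iff, Nat.cast_le]
                simp at hi; omega
              exact mul_le_mul h1 (ContinuousLinearMap.le_opNorm _ _)
                (norm_nonneg _) (zpow_pos hk _).le
          _ = k ^ (-(m : ℤ)) * ((∑ i ∈ Finset.Icc 1 m, ‖A i‖) * ‖x‖) := by
              rw [← Finset.mul_sum, ← Finset.sum_mul]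
          _ ≤ k ^ (-(m : ℤ)) * (SA * ‖x‖) := by
              refine mul_le_mul_of_nonneg_left ?_ (zpow_pos hk _).le
              exact mul_le_mul_of_nonneg_right
                (Finset.sum_le_sum_of_subset_of_nonneg
                  (Finset.Icc_subset_Icc_right (by omega)) fun i _ _ => norm_nonneg _)
                (norm_nonneg x)
      have hknorm : ‖((k : ℂ) ^ (((m+1 : ℕ)) : ℤ))‖ = k ^ (((m+1 : ℕ)) : ℤ) := by
        rw [norm_zpow, Complex.norm_real, Real.norm_eq_abs, abs_of_pos hk]
      have hstep : ‖A (m+1) x‖ ≤ k ^ (((m+1 : ℕ)) : ℤ) *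
          (4 * Real.pi / k * ‖x‖ + M * ‖x‖ + k ^ (-(m : ℤ)) * (SA * ‖x‖)) := by
        rw [hAx, norm_smul, hknorm]
        refine mul_le_mul_of_nonneg_left ?_ (zpow_pos hk _).le
        calc ‖F k x - (∑' n : ℕ, ((k : ℂ) ^ n) • B n) x
              - ∑ i ∈ Finset.Icc 1 m, ((k : ℂ) ^ (-(i : ℤ))) • A i x‖
            ≤ ‖F k x - (∑' n : ℕ, ((k : ℂ) ^ n) • B n) x‖
              + ‖∑ i ∈ Finset.Icc 1 m, ((k : ℂ) ^ (-(i : ℤ))) • A i x‖ := norm_sub_le _ _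
          _ ≤ (‖F k x‖ + ‖(∑' n : ℕ, ((k : ℂ) ^ n) • B n) x‖)
              + ‖∑ i ∈ Finset.Icc 1 m, ((k : ℂ) ^ (-(i : ℤ))) • A i x‖ := by
                refine add_le_add (norm_sub_le _ _) le_rfl
          _ ≤ 4 * Real.pi / k * ‖x‖ + M * ‖x‖ + k ^ (-(m : ℤ)) * (SA * ‖x‖) :=
                add_le_add (add_le_add (hF k hk hkε x) (hT k hk hkε x)) hmid
      have hz : (k:ℝ) ^ (((m+1 : ℕ)) : ℤ) = k ^ ((m : ℤ)) * k := by
        push_cast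
        rw [zpow_add_one₀ hk.ne']
      have e1 : k ^ (((m+1 : ℕ)) : ℤ) * (4 * Real.pi / k * ‖x‖)
          = k ^ ((m : ℤ)) * (4 * Real.pi * ‖x‖) := by
        rw [hz]; field_simp
      have hzm : (k:ℝ) ^ ((m : ℤ)) * k ^ (-(m : ℤ)) = 1 := by
        rw [← zpow_add₀ hk.ne', add_neg_cancel, zpow_zero]
      have e2 : k ^ (((m+1 : ℕ)) : ℤ) * (k ^ (-(m : ℤ)) * (SA * ‖x‖)) = k * (SA * ‖x‖) := by
        rw [hz, show k ^ ((m : ℤ)) * k * (k ^ (-(m : ℤ)) * (SA * ‖x‖))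
          = (k ^ ((m : ℤ)) * k ^ (-(m : ℤ))) * (k * (SA * ‖x‖)) from by ring, hzm, one_mul]
      have hle1 : k ^ ((m : ℤ)) ≤ k := by
        calc k ^ ((m : ℤ)) ≤ k ^ (1 : ℤ) :=
              zpow_le_zpow_right_of_le_one₀ hk hk1 (by exact_mod_cast hm1)
          _ = k := zpow_one k
      have hle2 : k ^ (((m+1 : ℕ)) : ℤ) ≤ k := by
        calc k ^ (((m+1 : ℕ)) : ℤ) ≤ k ^ (1 : ℤ) :=
              zpow_le_zpow_right_of_le_one₀ hk hk1 (by exact_mod_cast (by omega : 1 ≤ m + 1))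
          _ = k := zpow_one k
      calc ‖A (m+1) x‖ ≤ k ^ (((m+1 : ℕ)) : ℤ) *
            (4 * Real.pi / k * ‖x‖ + M * ‖x‖ + k ^ (-(m : ℤ)) * (SA * ‖x‖)) := hstep
        _ = k ^ ((m : ℤ)) * (4 * Real.pi * ‖x‖) + k ^ (((m+1 : ℕ)) : ℤ) * (M * ‖x‖)
            + k * (SA * ‖x‖) := by rw [mul_add, mul_add, e1, e2]
        _ ≤ k * (4 * Real.pi * ‖x‖) + k * (M * ‖x‖) + k * (SA * ‖x‖) :=
            add_le_add (add_le_add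
              (mul_le_mul_of_nonneg_right hle1 (by positivity))
              (mul_le_mul_of_nonneg_right hle2 (by positivity))) le_rfl
        _ = k * C := by rw [hCdef]; ring
    have hle0 : ‖A (m+1) x‖ ≤ 0 := by
      have h1 : Filter.Tendsto (fun k : ℝ => k * C) (nhdsWithin 0 (Set.Ioi 0)) (nhds 0) := by
        have h2 := (continuous_mul_const C).tendsto (0:ℝ)
        have h3 := h2.mono_left (nhdsWithin_le_nhds (s := Set.Ioi 0)); rwa [zero_mul] at h3
      refine ge_of_tendsto h1 ?_
      filter_upwards [Ioo_mem_nhdsGT_of_mem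
        (Set.left_mem_Ico.mpr (by positivity : (0:ℝ) < min ε 1))] with k hk
      exact hbound k hk.1 hk.2
    have : ‖A (m+1) x‖ = 0 := le_antisymm hle0 (norm_nonneg _)
    simpa using this
  have main : ∀ d : ℕ, ∀ j : ℕ, 2 ≤ j → j ≤ N → N ≤ j + d → A j = 0 := by
    intro d
    induction d with
    | zero =>
        intro j hj2 hjN hd
        exact key j hj2 hjN fun m hm hmN => absurd hm (by omega)
    | succ d ih =>
        intro j hj2 hjN hd
        exact key j hj2 hjN fun m hm hmN => ih m (by omega) hmN (by omega)
  intro j hj2 hjN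
  exact main N j hj2 hjN (by omega)
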